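/- ∑_{k=1}^∞ (−27/16)^k / (k · C(3k,k)) = (√15/5)·arctan((4√3 − √15)/11) − log 2. -/

import Mathlib

open Real MeasureTheory intervalIntegral

lemma beta_nat (b : ℕ) : ∀ a : ℕ, ∫ t in (0:ℝ)..1, t^a * (1-t)^b
    = (Nat.factorial a : ℝ) * (Nat.factorial b) / (Nat.factorial (a+b+1)) := by
  induction b with
  | zero =>
    intro a
    simp only [pow_zero, mul_one, integral_pow, Nat.factorial, Nat.add_zero]
    push_cast
    rw [one_pow]
    have h : (a:ℝ) + 1 ≠ 0 := by positivity
    have h2 : (Nat.factorial a : ℝ) ≠ 0 := by exact_mod_cast Nat.factorial_ne_zero _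
    field_simp
    simp
  | succ b ih =>
    intro a
    have hcont1 : Continuous (fun t : ℝ => t^a * (1-t)^(b+1)) := by fun_prop
    have hcont2 : Continuous (fun t : ℝ => t^(a+1) * (1-t)^b) := by fun_prop
    have hF : ∀ t ∈ Set.uIcc (0:ℝ) 1, HasDerivAt (fun t : ℝ => t^(a+1)*(1-t)^(b+1))
        (((a:ℝ)+1)*(t^a*(1-t)^(b+1)) - ((b:ℝ)+1)*(t^(a+1)*(1-t)^b)) t := by
      intro t _
      have h1 : HasDerivAt (fun t:ℝ => t^(a+1)) (((a:ℝ)+1)*t^a) t := by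
        simpa using hasDerivAt_pow (a+1) t
      have h2 : HasDerivAt (fun t:ℝ => (1-t)^(b+1)) (-(((b:ℝ)+1)*(1-t)^b)) t := by
        have := (hasDerivAt_pow (b+1) (1-t)).comp t
          (((hasDerivAt_id t).const_sub 1))
        simpa [Function.comp_def] using this
      have := h1.mul h2
      exact this.congr_deriv (by ring)
    have h0 : ∫ t in (0:ℝ)..1, (((a:ℝ)+1)*(t^a*(1-t)^(b+1)) - ((b:ℝ)+1)*(t^(a+1)*(1-t)^b))
        = (1:ℝ)^(a+1)*(1-1)^(b+1) - (0:ℝ)^(a+1)*(1-0)^(b+1) := by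
      apply integral_eq_sub_of_hasDerivAt hF
      apply Continuous.intervalIntegrable
      fun_prop
    rw [integral_sub ((hcont1.intervalIntegrable _ _).const_mul _)
        ((hcont2.intervalIntegrable _ _).const_mul _),
      intervalIntegral.integral_const_mul, intervalIntegral.integral_const_mul] at h0
    have hz : (1:ℝ)^(a+1)*(1-1)^(b+1) - (0:ℝ)^(a+1)*(1-0)^(b+1) = 0 := by
      simp [zero_pow (Nat.succ_ne_zero a)]
    rw [hz, sub_eq_zero] at h0
    have hIH := ih (a+1)
    rw [hIH] at h0
    have ha1 : ((a:ℝ)+1) ≠ 0 := by positivity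
    have key : ∫ t in (0:ℝ)..1, t^a*(1-t)^(b+1)
        = ((b:ℝ)+1) * ((Nat.factorial (a+1) : ℝ) * (Nat.factorial b) / (Nat.factorial (a+1+b+1))) / ((a:ℝ)+1) := by
      field_simp at h0 ⊢
      linarith [h0]
    rw [key]
    have e1 : (Nat.factorial (a+1) : ℝ) = ((a:ℝ)+1) * Nat.factorial a := by
      rw [Nat.factorial_succ]; push_cast; ring
    have e2 : (Nat.factorial (b+1) : ℝ) = ((b:ℝ)+1) * Nat.factorial b := by
      rw [Nat.factorial_succ]; push_cast; ring
    have e3 : a+1+b+1 = a+(b+1)+1 := by omega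
    rw [e1, e3, e2]
    have h3 : (Nat.factorial (a+(b+1)+1) : ℝ) ≠ 0 := by
      exact_mod_cast Nat.factorial_ne_zero _
    field_simp


lemma s3sq : Real.sqrt 3 ^ 2 = 3 := Real.sq_sqrt (by norm_num)
lemma s5sq : Real.sqrt 5 ^ 2 = 5 := Real.sq_sqrt (by norm_num)
lemma s15sq : Real.sqrt 15 ^ 2 = 15 := Real.sq_sqrt (by norm_num)
lemma s15eq : Real.sqrt 15 = Real.sqrt 3 * Real.sqrt 5 := by
  rw [← Real.sqrt_mul (by norm_num)]; norm_num
lemma s5gt : (13:ℝ)/6 < Real.sqrt 5 := by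
  rw [show (13:ℝ)/6 = Real.sqrt ((13/6)^2) by rw [Real.sqrt_sq]; norm_num]
  apply Real.sqrt_lt_sqrt <;> norm_num
lemma s5lt : Real.sqrt 5 < 9/4 := by
  rw [show (9:ℝ)/4 = Real.sqrt ((9/4)^2) by rw [Real.sqrt_sq]; norm_num]
  apply Real.sqrt_lt_sqrt <;> norm_num
lemma s15pos : (0:ℝ) < Real.sqrt 15 := Real.sqrt_pos.mpr (by norm_num)

lemma atan_combo :
    Real.arctan (7/Real.sqrt 15) - Real.arctan (1/Real.sqrt 15)
      = 3 * Real.arctan ((4*Real.sqrt 3 - Real.sqrt 15)/11) := by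
  have h3 := s3sq
  have h5 := s5sq
  have h15sq := s15sq
  have h15 := s15eq
  have hg := s5gt
  have hl := s5lt
  have h15p := s15pos
  have h15ne : Real.sqrt 15 ≠ 0 := ne_of_gt h15p
  set s3 := Real.sqrt 3 with hs3
  set s5 := Real.sqrt 5 with hs5
  set b : ℝ := (4*s3 - Real.sqrt 15)/11 with hb
  set c : ℝ := 16*s3 - 7*Real.sqrt 15 with hc
  have hbb : b * b < 1 := by
    rw [hb, h15]
    rw [div_mul_div_comm, div_lt_one (by norm_num)]
    nlinarith [sq_nonneg s3, sq_nonneg s5, sq_nonneg (4 - s5)]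
  have step1 : Real.arctan b + Real.arctan b = Real.arctan c := by
    rw [Real.arctan_add hbb]
    congr 1
    rw [div_eq_iff (by nlinarith [hbb] : 1 - b*b ≠ 0)]
    rw [hb, hc, h15]
    linear_combination (256/121*s3 - 240/121*s3*s5 + 72/121*s3*s5^2 - 7/121*s3*s5^3) * h3
      + (216/121*s3 - 21/121*s3*s5) * h5
  have hcb : c * b < 1 := by
    rw [hb, hc, h15]
    nlinarith [sq_nonneg s3, sq_nonneg s5]
  have step2 : Real.arctan c + Real.arctan b = Real.arctan (3*Real.sqrt 15/11) := by
    rw [Real.arctan_add hcb]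
    congr 1
    rw [div_eq_iff (by nlinarith [hcb] : 1 - c*b ≠ 0)]
    rw [hb, hc, h15]
    linear_combination (192/121*s3*s5 - 12/11*s3*s5^2 + 21/121*s3*s5^3) * h3
      + (-36/11*s3 + 63/121*s3*s5) * h5
  have hde : (3*Real.sqrt 15/11) * (1/Real.sqrt 15) < 1 := by
    have : (3*Real.sqrt 15/11) * (1/Real.sqrt 15) = 3/11 := by field_simp
    rw [this]; norm_num
  have step3 : Real.arctan (3*Real.sqrt 15/11) + Real.arctan (1/Real.sqrt 15)
      = Real.arctan (7/Real.sqrt 15) := by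
    rw [Real.arctan_add hde]
    congr 1
    rw [div_eq_iff (by
      have : (3*Real.sqrt 15/11) * (1/Real.sqrt 15) = 3/11 := by field_simp
      rw [this]; norm_num : (1:ℝ) - (3*Real.sqrt 15/11) * (1/Real.sqrt 15) ≠ 0)]
    field_simp
    linear_combination 3 * h15sq
  linarith [step1, step2, step3]



lemma term_eq (k : ℕ) :
    (-(27/16) : ℝ)^(k+1) / ((((k:ℝ)+1)) * (((3*(k+1)).choose (k+1) : ℕ) : ℝ))
      = ∫ t in (0:ℝ)..1, (-(27/16):ℝ)^(k+1) * (t^k * (1-t)^(2*k+2)) := by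
  rw [intervalIntegral.integral_const_mul, beta_nat]
  have hc := Nat.choose_mul_factorial_mul_factorial (show k+1 ≤ 3*(k+1) by omega)
  have h1 : 3*(k+1)-(k+1) = 2*k+2 := by omega
  rw [h1] at hc
  have hcR : (((3*(k+1)).choose (k+1) : ℕ) : ℝ) * (Nat.factorial (k+1)) * (Nat.factorial (2*k+2))
      = (Nat.factorial (3*(k+1)) : ℝ) := by exact_mod_cast congrArg (Nat.cast : ℕ → ℝ) hc
  have h2 : k+(2*k+2)+1 = 3*(k+1) := by omega
  rw [h2]
  have e1 : (Nat.factorial (k+1) : ℝ) = ((k:ℝ)+1) * Nat.factorial k := by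
    rw [Nat.factorial_succ]; push_cast; ring
  rw [e1] at hcR
  rw [div_eq_mul_inv]
  congr 1
  apply inv_eq_of_mul_eq_one_right
  have n3 : (Nat.factorial (3*(k+1)) : ℝ) ≠ 0 := by exact_mod_cast Nat.factorial_ne_zero _
  field_simp
  linear_combination hcR

lemma s15sq' : Real.sqrt 15 ^ 2 = 15 := Real.sq_sqrt (by norm_num)
lemma s15pos' : (0:ℝ) < Real.sqrt 15 := Real.sqrt_pos.mpr (by norm_num)

noncomputable def gg : ℝ → ℝ := fun t => (-(27/16):ℝ)*(1-t)^2 / (1 + (27/16)*t*(1-t)^2)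

noncomputable def HH : ℝ → ℝ := fun t =>
  -(2/3)*Real.log (3*t+1) - (1/6)*Real.log (9*t^2-21*t+16)
    + (Real.sqrt 15)⁻¹ * Real.arctan ((6*t-7)/Real.sqrt 15)

lemma Qpos (t : ℝ) : (0:ℝ) < 9*t^2-21*t+16 := by nlinarith [sq_nonneg (6*t-7)]

lemma hasDeriv_HH {t : ℝ} (ht : t ∈ Set.uIcc (0:ℝ) 1) : HasDerivAt HH (gg t) t := by
  rw [Set.uIcc_of_le (by norm_num : (0:ℝ) ≤ 1)] at ht
  obtain ⟨h0, h1⟩ := ht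
  have hs := s15pos'
  have hssq := s15sq'
  have hsne : Real.sqrt 15 ≠ 0 := ne_of_gt hs
  have hl1 : (0:ℝ) < 3*t+1 := by linarith
  have hQ : (0:ℝ) < 9*t^2-21*t+16 := Qpos t
  have d1 : HasDerivAt (fun t : ℝ => Real.log (3*t+1)) (3/(3*t+1)) t := by
    have hi : HasDerivAt (fun t : ℝ => 3*t+1) 3 t := by
      simpa using ((hasDerivAt_id t).const_mul (3:ℝ)).add_const 1
    simpa using hi.log (ne_of_gt hl1)
  have d2 : HasDerivAt (fun t : ℝ => Real.log (9*t^2-21*t+16)) ((18*t-21)/(9*t^2-21*t+16)) t := by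
    have hi : HasDerivAt (fun t : ℝ => 9*t^2-21*t+16) (18*t-21) t := by
      have := (((hasDerivAt_pow 2 t).const_mul (9:ℝ)).sub
        ((hasDerivAt_id t).const_mul (21:ℝ))).add_const (16:ℝ)
      exact this.congr_deriv (by push_cast; ring)
    simpa using hi.log (ne_of_gt hQ)
  have d3 : HasDerivAt (fun t : ℝ => Real.arctan ((6*t-7)/Real.sqrt 15))
      ((6/Real.sqrt 15) * (1/(1+((6*t-7)/Real.sqrt 15)^2))) t := by
    have hi : HasDerivAt (fun t : ℝ => (6*t-7)/Real.sqrt 15) (6/Real.sqrt 15) t := by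
      have : HasDerivAt (fun t : ℝ => 6*t-7) 6 t := by
        simpa using ((hasDerivAt_id t).const_mul (6:ℝ)).sub_const 7
      simpa [div_eq_mul_inv] using this.mul_const (Real.sqrt 15)⁻¹
    have := hi.arctan
    convert this using 1
    ring
  have dH : HasDerivAt HH
      (-(2/3)*(3/(3*t+1)) - (1/6)*((18*t-21)/(9*t^2-21*t+16))
        + (Real.sqrt 15)⁻¹ * ((6/Real.sqrt 15) * (1/(1+((6*t-7)/Real.sqrt 15)^2)))) t := by
    exact ((d1.const_mul (-(2/3))).sub (d2.const_mul (1/6))).add (d3.const_mul (Real.sqrt 15)⁻¹)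
  convert dH using 1
  have hden : (0:ℝ) < 1 + (27/16)*t*(1-t)^2 := by nlinarith [sq_nonneg (1-t)]
  have harct : 1+((6*t-7)/Real.sqrt 15)^2 = (15 + (6*t-7)^2)/15 := by
    rw [div_pow]
    rw [hssq]
    field_simp
  rw [gg, harct]
  have h15Q : 15 + (6*t-7)^2 = 4*(9*t^2-21*t+16) := by ring
  rw [h15Q]
  field_simp
  rw [hssq]
  have hQ' : t*(t*9-21)+16 ≠ 0 := by
    rw [show t*(t*9-21)+16 = 9*t^2-21*t+16 by ring]; exact ne_of_gt hQ
  field_simp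
  ring

lemma integral_gg : ∫ t in (0:ℝ)..1, gg t = HH 1 - HH 0 := by
  apply integral_eq_sub_of_hasDerivAt (fun t ht => hasDeriv_HH ht)
  apply ContinuousOn.intervalIntegrable
  apply ContinuousOn.div (by fun_prop) (by fun_prop)
  intro t ht
  rw [Set.uIcc_of_le (by norm_num : (0:ℝ) ≤ 1)] at ht
  have := ht.1
  have := ht.2
  exact ne_of_gt (by nlinarith [sq_nonneg (1-t)])


lemma HH_val : HH 1 - HH 0
    = (Real.sqrt 15/5)*Real.arctan ((4*Real.sqrt 3 - Real.sqrt 15)/11) - Real.log 2 := by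
  have hs := s15pos'
  have hssq := s15sq'
  have hsne : Real.sqrt 15 ≠ 0 := ne_of_gt hs
  simp only [HH]
  norm_num
  have e4 : Real.log 4 = 2 * Real.log 2 := by
    rw [show (4:ℝ) = 2^2 by norm_num, Real.log_pow]; push_cast; ring
  have e16 : Real.log 16 = 4 * Real.log 2 := by
    rw [show (16:ℝ) = 2^4 by norm_num, Real.log_pow]; push_cast; ring
  have ea1 : Real.arctan ((-1)/Real.sqrt 15) = - Real.arctan (1/Real.sqrt 15) := by
    rw [neg_div, Real.arctan_neg]
  have ea7 : Real.arctan ((-7)/Real.sqrt 15) = - Real.arctan (7/Real.sqrt 15) := by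
    rw [neg_div, Real.arctan_neg]
  rw [e4, e16, ea1, ea7]
  have hcombo := atan_combo
  have hcoef : (Real.sqrt 15)⁻¹ * 3 = Real.sqrt 15 / 5 := by
    field_simp
    norm_num
  linear_combination (Real.sqrt 15)⁻¹ * hcombo
    + Real.arctan ((4*Real.sqrt 3 - Real.sqrt 15)/11) * hcoef

theorem stmt_16 :
    ∑' k : ℕ, (-(27/16) : ℝ)^(k+1) / ((((k:ℝ)+1)) * (((3*(k+1)).choose (k+1) : ℕ) : ℝ)) =
    (Real.sqrt 15/5)*Real.arctan ((4*Real.sqrt 3 - Real.sqrt 15)/11) - Real.log 2 := by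
  have key : ∀ k : ℕ,
      (-(27/16) : ℝ)^(k+1) / ((((k:ℝ)+1)) * (((3*(k+1)).choose (k+1) : ℕ) : ℝ))
      = ∫ t in Set.Ioc (0:ℝ) 1, (-(27/16):ℝ)^(k+1) * (t^k * (1-t)^(2*k+2)) := by
    intro k
    rw [term_eq k, intervalIntegral.integral_of_le (by norm_num : (0:ℝ) ≤ 1)]
  rw [tsum_congr key]
  have hint : ∀ k : ℕ, IntegrableOn
      (fun t : ℝ => (-(27/16):ℝ)^(k+1) * (t^k * (1-t)^(2*k+2))) (Set.Ioc 0 1) := by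
    intro k
    exact Continuous.integrableOn_Ioc (by fun_prop)
  have hbound : ∀ k : ℕ, ∀ t ∈ Set.Ioc (0:ℝ) 1,
      ‖(-(27/16):ℝ)^(k+1) * (t^k * (1-t)^(2*k+2))‖ ≤ (27/16)*(1/4:ℝ)^k := by
    intro k t ht
    have h0 : (0:ℝ) ≤ t := le_of_lt ht.1
    have h1 : t ≤ 1 := ht.2
    have hnn : (0:ℝ) ≤ t^k * (1-t)^(2*k+2) :=
      mul_nonneg (pow_nonneg h0 _) (pow_nonneg (by linarith) _)
    rw [norm_mul, norm_pow, norm_neg, Real.norm_of_nonneg hnn]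
    have hx : ‖(27/16 : ℝ)‖ = 27/16 := by norm_num
    rw [hx]
    have hsplit : t^k * (1-t)^(2*k+2) = (t*(1-t)^2)^k * (1-t)^2 := by
      rw [mul_pow, ← pow_mul]; ring
    rw [hsplit]
    have hb1 : t*(1-t)^2 ≤ 4/27 := by
      nlinarith [mul_nonneg (sq_nonneg (3*t-1)) (by linarith : (0:ℝ) ≤ 4-3*t)]
    have hb2 : (t*(1-t)^2)^k ≤ (4/27:ℝ)^k :=
      pow_le_pow_left₀ (mul_nonneg h0 (sq_nonneg _)) hb1 k
    have hb3 : (1-t)^2 ≤ 1 := by nlinarith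
    calc (27/16:ℝ)^(k+1) * ((t*(1-t)^2)^k * (1-t)^2)
        ≤ (27/16:ℝ)^(k+1) * ((4/27:ℝ)^k * 1) := by
          apply mul_le_mul_of_nonneg_left _ (by positivity)
          exact mul_le_mul hb2 hb3 (sq_nonneg _) (by positivity)
      _ = (27/16)*(1/4:ℝ)^k := by
          rw [mul_one, pow_succ', mul_assoc, ← mul_pow]; norm_num
  have hsum : Summable (fun k : ℕ =>
      ∫ t in Set.Ioc (0:ℝ) 1, ‖(-(27/16):ℝ)^(k+1) * (t^k * (1-t)^(2*k+2))‖) := by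
    have hgeo : Summable (fun k : ℕ => (27/16:ℝ)*(1/4)^k) :=
      (summable_geometric_of_lt_one (by norm_num) (by norm_num)).mul_left _
    apply Summable.of_nonneg_of_le (fun k => integral_nonneg (fun t => norm_nonneg _))
      (fun k => ?_) hgeo
    calc ∫ t in Set.Ioc (0:ℝ) 1, ‖(-(27/16):ℝ)^(k+1) * (t^k * (1-t)^(2*k+2))‖
        ≤ ∫ _t in Set.Ioc (0:ℝ) 1, (27/16)*(1/4:ℝ)^k := by
          apply setIntegral_mono_on ((hint k).norm)
            (integrableOn_const measure_Ioc_lt_top.ne) measurableSet_Ioc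
          exact hbound k
      _ = (27/16)*(1/4:ℝ)^k := by simp
  rw [MeasureTheory.integral_tsum_of_summable_integral_norm hint hsum]
  have heq : Set.EqOn (fun t : ℝ => ∑' k : ℕ, (-(27/16):ℝ)^(k+1) * (t^k * (1-t)^(2*k+2)))
      gg (Set.Ioc 0 1) := by
    intro t ht
    have h0 : (0:ℝ) ≤ t := le_of_lt ht.1
    have h1 : t ≤ 1 := ht.2
    have hterm : ∀ k : ℕ, (-(27/16):ℝ)^(k+1) * (t^k * (1-t)^(2*k+2))
        = ((-(27/16):ℝ)*(1-t)^2) * ((-(27/16):ℝ)*(t*(1-t)^2))^k := by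
      intro k
      rw [pow_succ', pow_add (1-t) (2*k) 2, pow_mul,
        mul_pow (-(27/16) : ℝ) (t*(1-t)^2) k, mul_pow t ((1-t)^2) k]
      ring
    have hr : ‖(-(27/16):ℝ)*(t*(1-t)^2)‖ < 1 := by
      rw [Real.norm_eq_abs, abs_mul, abs_neg, abs_of_pos (by norm_num : (0:ℝ) < 27/16),
        abs_of_nonneg (mul_nonneg h0 (sq_nonneg _))]
      nlinarith [mul_nonneg (sq_nonneg (3*t-1)) (by linarith : (0:ℝ) ≤ 4-3*t)]
    simp only []
    rw [tsum_congr hterm, tsum_mul_left, tsum_geometric_of_norm_lt_one hr]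
    rw [gg]
    rw [show (1:ℝ) - (-(27/16):ℝ)*(t*(1-t)^2) = 1 + (27/16)*t*(1-t)^2 by ring]
    ring
  rw [setIntegral_congr_fun measurableSet_Ioc heq,
    ← intervalIntegral.integral_of_le (by norm_num : (0:ℝ) ≤ 1), integral_gg, HH_val]
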